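/- Every left-orderable group is diffuse; that is, if G admits a total order invariant under left multiplication, then for every non-empty finite subset C of G there exists c in C such that for every non-identity g in G, either g·c is not in C or g⁻¹·c is not in C. -/
import Mathlib

/-- Every left-orderable group is diffuse: if `G` carries a linear order invariant
under left multiplication, then every non-empty finite subset `C` of `G` has an
extremal element `c`, i.e. for every `g ≠ 1`, `g * c ∉ C` or `g⁻¹ * c ∉ C`. -/
theorem leftOrderable_diffuse {G : Type*} [Group G] [LinearOrder G]
    (hmul : ∀ g a b : G, a ≤ b → g * a ≤ g * b) :
    ∀ C : Finset G, C.Nonempty →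
      ∃ c ∈ C, ∀ g : G, g ≠ 1 → g * c ∉ C ∨ g⁻¹ * c ∉ C := by
  intro C hC
  obtain ⟨c, hc, hmax⟩ := C.exists_max_image id hC
  refine ⟨c, hc, fun g hg => ?_⟩
  by_contra h
  push_neg at h
  obtain ⟨h1, h2⟩ := h
  have e1 : g * c ≤ c := hmax _ h1
  have e2 : g⁻¹ * c ≤ c := hmax _ h2
  have e3 : c ≤ g⁻¹ * c := by
    have := hmul g⁻¹ (g * c) c e1
    simpa [mul_assoc] using this
  have : g⁻¹ * c = c := le_antisymm e2 e3
  have : g⁻¹ = 1 := by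
    have := mul_right_cancel (b := c) (by simpa using this)
    simpa using this
  exact hg (by simpa using congrArg (·⁻¹) this)
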